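/- If Y satisfies the SDE dY(t) = k(t,Y(t−))dt + g(t,Y(t−))dB_t + ∫_{|y|<c} h(t,Y(t−),y) Ñ(dt,dy) with Y(0)=x₀, and Y is stochastically stable, then X(t) := Y(E_t), which solves the time-changed SDE dX = k(E_t,X(t−))dE_t + g(E_t,X(t−))dB_{E_t} + ∫_{|y|<c} h(E_t,X(t−),y) Ñ(dE_t,dy), is stochastically stable. -/
import Mathlib


open MeasureTheory

/-- Stochastic stability of a family of processes `Z x₀ t ω` indexed by the initial value
`x₀`: for every `ε ∈ (0,1)` and `r > 0` there is `δ > 0` such that `|x₀| < δ` implies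
`P(|Z (t, x₀)| < r for all t ≥ 0) ≥ 1 - ε`. -/
def StochasticallyStable {Ω : Type*} [MeasurableSpace Ω] (P : Measure Ω)
    (Z : ℝ → ℝ → Ω → ℝ) : Prop :=
  ∀ ε ∈ Set.Ioo (0 : ℝ) 1, ∀ r : ℝ, 0 < r → ∃ δ > 0, ∀ x₀ : ℝ, |x₀| < δ →
    ENNReal.ofReal (1 - ε) ≤ P {ω | ∀ t : ℝ, 0 ≤ t → |Z x₀ t ω| < r}

/-- If `Y` solves the SDE `dY = k dt + g dB + ∫_{|y|<c} h dÑ` and is stochastically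
stable, then the time-changed process `X (t, x₀) := Y (E_t, x₀)` — which, by Kobayashi's
duality, solves the corresponding time-changed SDE driven by `dE_t`, `dB_{E_t}` and
`Ñ(dE_t, dy)` — is stochastically stable.  The time change enters only through the fact
that the image of `[0,∞)` under `t ↦ E_t` is almost surely `[0,∞)`. -/
theorem time_changed_sde_stability_transfer
    {Ω : Type*} [MeasurableSpace Ω] (P : Measure Ω) [IsProbabilityMeasure P]
    (E : ℝ → Ω → ℝ) (Y X : ℝ → ℝ → Ω → ℝ)
    (hEnn : ∀ t ω, 0 ≤ E t ω)
    (hEmono : ∀ ω, Monotone fun t => E t ω)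
    (hE0 : ∀ ω, E 0 ω = 0)
    (himg : ∀ᵐ ω ∂P, (fun t => E t ω) '' Set.Ici 0 = Set.Ici 0)
    (hX : ∀ x₀ t ω, X x₀ t ω = Y x₀ (E t ω) ω)
    (hY : StochasticallyStable P Y) :
    StochasticallyStable P X := by
  intro ε hε r hr
  obtain ⟨δ, hδ, hδY⟩ := hY ε hε r hr
  refine ⟨δ, hδ, fun x₀ hx₀ => ?_⟩
  refine le_trans (hδY x₀ hx₀) ?_
  have hsub : ∀ᵐ ω ∂P, ω ∈ {ω | ∀ t : ℝ, 0 ≤ t → |Y x₀ t ω| < r} →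
      ω ∈ {ω | ∀ t : ℝ, 0 ≤ t → |X x₀ t ω| < r} := by
    filter_upwards [himg] with ω _ hω t ht
    rw [hX]
    exact hω (E t ω) (hEnn t ω)
  exact measure_mono_ae hsub
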